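/- arXiv:1504.01299 — 4 statements merged into one kernel-verified Lean document; each statement's English description precedes it below -/
import Mathlib

section
/- Let α: ℂ[[x₁,…,x_{r+l+1}]] → ℂ[[y₁,…,y_n]] be a ℂ-algebra homomorphism of formal power series rings with n > s + l, and suppose z := α(x_{r+l+1}) lies in the maximal ideal. Suppose there exists a nonzero G = Σ_{i≥0} a_i(x₁,…,x_{r+l}) x_{r+l+1}^i with α(G) = 0, α(a_i) ∈ ℂ[[y₁,…,y_{s+l}]] for all i, and α(a_i) ≠ 0 whenever a_i ≠ 0. If z ∉ ℂ[[y₁,…,y_{s+l}]], then a contradiction arises; i.e., z ∈ ℂ[[y₁,…,y_{s+l}]]. -/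
open Finset

namespace RootAux

noncomputable section

variable {n : ℕ}

/-- total degree of an exponent -/
def Dg (d : Fin n →₀ ℕ) : ℕ := d.sum fun _ k => k

/-- weight counting only variables of index `≥ c` -/
def Wt (c : ℕ) (d : Fin n →₀ ℕ) : ℕ := d.sum fun j k => if c ≤ (j : ℕ) then k else 0

lemma Dg_add (a b : Fin n →₀ ℕ) : Dg (a + b) = Dg a + Dg b :=
  Finsupp.sum_add_index' (fun _ => rfl) (fun _ _ _ => rfl)

lemma Wt_add (c : ℕ) (a b : Fin n →₀ ℕ) : Wt c (a + b) = Wt c a + Wt c b :=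
  Finsupp.sum_add_index' (fun _ => by simp) (fun j b₁ b₂ => by split <;> simp)

lemma Wt_le_Dg (c : ℕ) (d : Fin n →₀ ℕ) : Wt c d ≤ Dg d :=
  Finset.sum_le_sum fun j _ => by dsimp only; split <;> simp

lemma Dg_eq_zero (d : Fin n →₀ ℕ) (h : Dg d = 0) : d = 0 := by
  ext j
  by_cases hj : j ∈ d.support
  · simpa using (Finset.sum_eq_zero_iff.mp h) j hj
  · simpa using Finsupp.notMem_support_iff.mp hj

lemma Wt_zero (c : ℕ) : Wt c (0 : Fin n →₀ ℕ) = 0 := by simp [Wt]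

lemma Wt_ne_zero_iff (c : ℕ) (d : Fin n →₀ ℕ) :
    Wt c d ≠ 0 ↔ ∃ j : Fin n, c ≤ (j : ℕ) ∧ d j ≠ 0 := by
  constructor
  · intro h
    by_contra hc
    push_neg at hc
    apply h
    apply Finset.sum_eq_zero
    intro j _
    dsimp only
    split
    · exact hc j ‹_›
    · rfl
  · rintro ⟨j, hj, hdj⟩ h
    have hjs : j ∈ d.support := Finsupp.mem_support_iff.mpr hdj
    have := (Finset.sum_eq_zero_iff.mp h) j hjs
    simp only [if_pos hj] at this
    exact hdj this

local notation "R" => MvPowerSeries (Fin n) ℂ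
local notation "cf" => MvPowerSeries.coeff

lemma pow_low (y : R) (hy : cf 0 y = 0) (i : ℕ) :
    ∀ d : Fin n →₀ ℕ, Dg d < i → cf d (y ^ i) = 0 := by
  induction i with
  | zero => exact fun d h => absurd h (Nat.not_lt_zero _)
  | succ i ih =>
    intro d h
    rw [pow_succ, MvPowerSeries.coeff_mul]
    apply Finset.sum_eq_zero
    rintro ⟨u, v⟩ huv
    rw [Finset.HasAntidiagonal.mem_antidiagonal] at huv
    have hD : Dg u + Dg v = Dg d := by rw [← Dg_add, huv]
    by_cases hu : Dg u < i
    · rw [ih u hu, zero_mul]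
    · have hv0 : v = 0 := Dg_eq_zero v (by omega)
      rw [hv0, hy, mul_zero]

lemma mul_pow_low (x y : R) (hy : cf 0 y = 0) (i : ℕ) (d : Fin n →₀ ℕ) (h : Dg d < i) :
    cf d (x * y ^ i) = 0 := by
  rw [MvPowerSeries.coeff_mul]
  apply Finset.sum_eq_zero
  rintro ⟨u, v⟩ huv
  rw [Finset.HasAntidiagonal.mem_antidiagonal] at huv
  have hD : Dg u + Dg v = Dg d := by rw [← Dg_add, huv]
  rw [pow_low y hy i v (by omega), mul_zero]

/-- membership in the subring of series in the low variables -/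
def IsLow (c : ℕ) (x : R) : Prop := ∀ d, Wt c d ≠ 0 → cf d x = 0

lemma IsLow.mul {c : ℕ} {x y : R} (hx : IsLow c x) (hy : IsLow c y) : IsLow c (x * y) := by
  intro d hd
  rw [MvPowerSeries.coeff_mul]
  apply Finset.sum_eq_zero
  rintro ⟨u, v⟩ huv
  rw [Finset.HasAntidiagonal.mem_antidiagonal] at huv
  have hW : Wt c u + Wt c v = Wt c d := by rw [← Wt_add, huv]
  rcases eq_or_ne (Wt c u) 0 with h | h
  · rw [hy v (by omega), mul_zero]
  · rw [hx u h, zero_mul]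

lemma IsLow.one {c : ℕ} : IsLow c (1 : R) := by
  intro d hd
  rw [MvPowerSeries.coeff_one, if_neg]
  rintro rfl
  exact hd (Wt_zero c)

lemma IsLow.pow {c : ℕ} {x : R} (hx : IsLow c x) (j : ℕ) : IsLow c (x ^ j) := by
  induction j with
  | zero => simpa using IsLow.one
  | succ j ih => rw [pow_succ]; exact ih.mul hx

/-- Taylor coefficients of `f(b + t)` where `f(t) = Σ e i * tⁱ`, defined coefficientwise. -/
def gg (c : ℕ) (e : ℕ → R) (b : R) (k : ℕ) : R :=
  fun d => ∑ i ∈ Finset.range (Dg d + k + 1), (i.choose k : ℂ) * cf d (e i * b ^ (i - k))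

lemma coeff_gg (c : ℕ) (e : ℕ → R) (b : R) (k : ℕ) (d : Fin n →₀ ℕ) :
    cf d (gg c e b k) = ∑ i ∈ Finset.range (Dg d + k + 1),
      (i.choose k : ℂ) * cf d (e i * b ^ (i - k)) := rfl

lemma gg_low {c : ℕ} {e : ℕ → R} {b : R} (hc : ∀ i, IsLow c (e i)) (hb : IsLow c b) (k : ℕ) :
    IsLow c (gg c e b k) := by
  intro d hd
  rw [coeff_gg]
  apply Finset.sum_eq_zero
  intro i _
  rw [(hc i).mul (hb.pow (i - k)) d hd, mul_zero]

lemma gg_trunc {c : ℕ} {e : ℕ → R} {b : R} (hb : cf 0 b = 0) (k : ℕ) (d : Fin n →₀ ℕ)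
    (N : ℕ) (hN : Dg d + k + 1 ≤ N) :
    cf d (gg c e b k) = ∑ i ∈ Finset.range N, (i.choose k : ℂ) * cf d (e i * b ^ (i - k)) := by
  rw [coeff_gg]
  apply Finset.sum_subset (Finset.range_subset_range.mpr hN)
  intro i hiN hi
  rw [Finset.mem_range, not_lt] at hi
  rw [mul_pow_low (e i) b hb (i - k) d (by omega), mul_zero]

lemma coeff_mul_natCast (x : R) (m : ℕ) (d : Fin n →₀ ℕ) :
    cf d (x * (m : R)) = m * cf d x := by
  have h : x * (m : R) = m • x := by rw [nsmul_eq_mul, mul_comm]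
  rw [h, map_nsmul, nsmul_eq_mul]

lemma claim1 (c : ℕ) (e : ℕ → R) (b w : R) (hb : cf 0 b = 0) (hw : cf 0 w = 0)
    (hsum : ∀ d : Fin n →₀ ℕ, ∑ i ∈ Finset.range (Dg d + 1), cf d (e i * (b + w) ^ i) = 0)
    (d : Fin n →₀ ℕ) :
    ∑ k ∈ Finset.range (Dg d + 1), cf d (gg c e b k * w ^ k) = 0 := by
  set M := 2 * Dg d + 2 with hM
  have step1 : ∀ k ∈ Finset.range (Dg d + 1),
      cf d (gg c e b k * w ^ k)
        = ∑ i ∈ Finset.range M, (i.choose k : ℂ) * cf d (e i * b ^ (i - k) * w ^ k) := by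
    intro k hk
    rw [Finset.mem_range] at hk
    rw [MvPowerSeries.coeff_mul]
    have huv : ∀ p ∈ Finset.HasAntidiagonal.antidiagonal d,
        cf p.1 (gg c e b k) * cf p.2 (w ^ k)
          = ∑ i ∈ Finset.range M,
              (i.choose k : ℂ) * (cf p.1 (e i * b ^ (i - k)) * cf p.2 (w ^ k)) := by
      rintro ⟨u, v⟩ hp
      rw [Finset.HasAntidiagonal.mem_antidiagonal] at hp
      have hDu : Dg u + Dg v = Dg d := by rw [← Dg_add, hp]
      rw [gg_trunc hb k u M (by omega), Finset.sum_mul]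
      exact Finset.sum_congr rfl fun i _ => by ring
    rw [Finset.sum_congr rfl huv, Finset.sum_comm]
    refine Finset.sum_congr rfl fun i _ => ?_
    rw [← Finset.mul_sum, MvPowerSeries.coeff_mul]
  rw [Finset.sum_congr rfl step1]
  have step2 : ∑ k ∈ Finset.range (Dg d + 1), ∑ i ∈ Finset.range M,
        (i.choose k : ℂ) * cf d (e i * b ^ (i - k) * w ^ k)
      = ∑ k ∈ Finset.range M, ∑ i ∈ Finset.range M,
        (i.choose k : ℂ) * cf d (e i * b ^ (i - k) * w ^ k) := by
    apply Finset.sum_subset (Finset.range_subset_range.mpr (by omega))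
    intro k hkM hk
    rw [Finset.mem_range, not_lt] at hk
    apply Finset.sum_eq_zero
    intro i _
    rw [mul_pow_low (e i * b ^ (i - k)) w hw k d (by omega), mul_zero]
  rw [step2, Finset.sum_comm]
  have step3 : ∀ i ∈ Finset.range M,
      ∑ k ∈ Finset.range M, (i.choose k : ℂ) * cf d (e i * b ^ (i - k) * w ^ k)
        = cf d (e i * (b + w) ^ i) := by
    intro i hi
    rw [Finset.mem_range] at hi
    have shrink : ∑ k ∈ Finset.range M, (i.choose k : ℂ) * cf d (e i * b ^ (i - k) * w ^ k)
        = ∑ k ∈ Finset.range (i + 1), (i.choose k : ℂ) * cf d (e i * b ^ (i - k) * w ^ k) := by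
      symm
      apply Finset.sum_subset (Finset.range_subset_range.mpr (by omega))
      intro k _ hk
      rw [Finset.mem_range, not_lt] at hk
      rw [Nat.choose_eq_zero_of_lt (by omega), Nat.cast_zero, zero_mul]
    rw [shrink]
    have hcomm : b + w = w + b := add_comm b w
    rw [hcomm, add_pow, Finset.mul_sum, map_sum]
    refine Finset.sum_congr rfl fun k hk => ?_
    have hrearr : e i * (w ^ k * b ^ (i - k) * ((i.choose k : ℕ) : R))
        = e i * b ^ (i - k) * w ^ k * ((i.choose k : ℕ) : R) := by ring
    rw [hrearr, coeff_mul_natCast]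
  rw [Finset.sum_congr rfl step3]
  rw [← hsum d]
  symm
  apply Finset.sum_subset (Finset.range_subset_range.mpr (by omega))
  intro i _ hi
  rw [Finset.mem_range, not_lt] at hi
  have hbw : cf 0 (b + w) = 0 := by rw [map_add, hb, hw, add_zero]
  rw [mul_pow_low (e i) (b + w) hbw i d (by omega)]

lemma pow_parts (c m : ℕ) (z' zm : R)
    (h1 : ∀ d, Wt c d < m → cf d z' = 0)
    (h2 : ∀ d, cf d zm = if Wt c d = m then cf d z' else 0) (k : ℕ) :
    (∀ d, Wt c d < k * m → cf d (z' ^ k) = 0) ∧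
    (∀ d, Wt c d ≠ k * m → cf d (zm ^ k) = 0) ∧
    (∀ d, Wt c d = k * m → cf d (z' ^ k) = cf d (zm ^ k)) := by
  induction k with
  | zero =>
    refine ⟨fun d h => absurd h (by omega), fun d h => ?_, fun d h => rfl⟩
    rw [pow_zero, MvPowerSeries.coeff_one, if_neg]
    rintro rfl
    exact h (by rw [Wt_zero]; omega)
  | succ k ih =>
    obtain ⟨ih1, ih2, ih3⟩ := ih
    have hsm : (k + 1) * m = k * m + m := by ring
    refine ⟨fun d h => ?_, fun d h => ?_, fun d h => ?_⟩
    · rw [pow_succ, MvPowerSeries.coeff_mul]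
      apply Finset.sum_eq_zero
      rintro ⟨u, v⟩ hp
      rw [Finset.HasAntidiagonal.mem_antidiagonal] at hp
      have hW : Wt c u + Wt c v = Wt c d := by rw [← Wt_add, hp]
      rw [hsm] at h
      by_cases hu : Wt c u < k * m
      · rw [ih1 u hu, zero_mul]
      · rw [h1 v (by omega), mul_zero]
    · rw [pow_succ, MvPowerSeries.coeff_mul]
      apply Finset.sum_eq_zero
      rintro ⟨u, v⟩ hp
      rw [Finset.HasAntidiagonal.mem_antidiagonal] at hp
      have hW : Wt c u + Wt c v = Wt c d := by rw [← Wt_add, hp]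
      rw [hsm] at h
      by_cases hu : Wt c u = k * m
      · rw [h2 v, if_neg (by omega), mul_zero]
      · rw [ih2 u hu, zero_mul]
    · rw [pow_succ, pow_succ, MvPowerSeries.coeff_mul, MvPowerSeries.coeff_mul]
      apply Finset.sum_congr rfl
      rintro ⟨u, v⟩ hp
      rw [Finset.HasAntidiagonal.mem_antidiagonal] at hp
      have hW : Wt c u + Wt c v = Wt c d := by rw [← Wt_add, hp]
      rw [hsm] at h
      rcases lt_trichotomy (Wt c u) (k * m) with hu | hu | hu
      · rw [ih1 u hu, ih2 u (by omega), zero_mul, zero_mul]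
      · rw [ih3 u hu, h2 v, if_pos (by omega)]
      · rw [h1 v (by omega), h2 v, if_neg (by omega), mul_zero, mul_zero]

end

end RootAux

open RootAux in
/-- Suppose `n > s + l`, and let `e i ∈ ℂ[[y₁,…,y_n]]` (the images `α(a_i)`) all lie in the
subring `ℂ[[y₁,…,y_{s+l}]]` (i.e. their coefficients vanish on any exponent involving a
variable of index `≥ s + l`), not all zero, so that `f(t) = Σ e_i t^i` is a nonzero series.
Let `z` (namely `α(x_{r+l+1})`) lie in the maximal ideal, and suppose `f(z) = Σ e_i z^i = 0`
(each coefficient of the sum vanishes; the sum is coefficientwise finite since `z` has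
positive order).  Then `z ∈ ℂ[[y₁,…,y_{s+l}]]`. -/
theorem root_lies_in_subring (n s l : ℕ) (hn : s + l < n)
    (e : ℕ → MvPowerSeries (Fin n) ℂ)
    (he : ∀ i, ∀ d : Fin n →₀ ℕ, (∃ j : Fin n, s + l ≤ (j : ℕ) ∧ d j ≠ 0) →
      MvPowerSeries.coeff d (e i) = 0)
    (hne : ∃ i, e i ≠ 0)
    (z : MvPowerSeries (Fin n) ℂ)
    (hz : MvPowerSeries.constantCoeff z = 0)
    (hsum : ∀ d : Fin n →₀ ℕ,
      ∑ i ∈ Finset.range ((d.sum fun _ k => k) + 1),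
        MvPowerSeries.coeff d (e i * z ^ i) = 0) :
    ∀ d : Fin n →₀ ℕ, (∃ j : Fin n, s + l ≤ (j : ℕ) ∧ d j ≠ 0) →
      MvPowerSeries.coeff d z = 0 := by
  classical
  intro d0 hd0
  by_contra hzd0
  set c := s + l with hc
  have heL : ∀ i, IsLow c (e i) := fun i d hd => he i d ((Wt_ne_zero_iff c d).mp hd)
  have hWd0 : Wt c d0 ≠ 0 := (Wt_ne_zero_iff c d0).mpr hd0
  have hz0 : MvPowerSeries.coeff 0 z = 0 := by
    rw [MvPowerSeries.coeff_zero_eq_constantCoeff]; exact hz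
  set b0 : MvPowerSeries (Fin n) ℂ :=
    fun d => if Wt c d = 0 then MvPowerSeries.coeff d z else 0 with hb0def
  have hb0coeff : ∀ d, MvPowerSeries.coeff d b0
      = if Wt c d = 0 then MvPowerSeries.coeff d z else 0 := fun d => rfl
  set z' := z - b0 with hz'def
  have hz'coeff : ∀ d, MvPowerSeries.coeff d z'
      = if Wt c d = 0 then 0 else MvPowerSeries.coeff d z := by
    intro d
    rw [hz'def, map_sub, hb0coeff]
    split
    · rw [sub_self]
    · rw [sub_zero]
  have hb0c : MvPowerSeries.coeff 0 b0 = 0 := by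
    rw [hb0coeff, if_pos (Wt_zero c), hz0]
  have hz'c : MvPowerSeries.coeff 0 z' = 0 := by
    rw [hz'coeff, if_pos (Wt_zero c)]
  have hzeq : z = b0 + z' := by rw [hz'def]; ring
  have hb0L : IsLow c b0 := fun d hd => by rw [hb0coeff, if_neg hd]
  have hQ : ∃ k, ∃ dd : Fin n →₀ ℕ, Wt c dd = k ∧ MvPowerSeries.coeff dd z' ≠ 0 :=
    ⟨Wt c d0, d0, rfl, by rw [hz'coeff, if_neg hWd0]; exact hzd0⟩
  set m := Nat.find hQ with hmdef
  obtain ⟨dm, hdm, hdmne⟩ := Nat.find_spec hQ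
  have hmin : ∀ d', Wt c d' < m → MvPowerSeries.coeff d' z' = 0 := by
    intro d' hlt
    by_contra hne'
    exact Nat.find_min hQ hlt ⟨d', rfl, hne'⟩
  have hm0 : 0 < m := by
    rcases Nat.eq_zero_or_pos m with h0 | h0
    · exact absurd (by rw [hz'coeff, if_pos (hdm.trans h0)]) hdmne
    · exact h0
  set zm : MvPowerSeries (Fin n) ℂ :=
    fun d => if Wt c d = m then MvPowerSeries.coeff d z' else 0 with hzmdef
  have hzmcoeff : ∀ d, MvPowerSeries.coeff d zm
      = if Wt c d = m then MvPowerSeries.coeff d z' else 0 := fun d => rfl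
  have hzmne : zm ≠ 0 := by
    intro h0
    apply hdmne
    have h1 : MvPowerSeries.coeff dm zm = 0 := by rw [h0, map_zero]
    rwa [hzmcoeff, if_pos hdm] at h1
  have hPP := fun k => pow_parts c m z' zm hmin hzmcoeff k
  have hsum' : ∀ d : Fin n →₀ ℕ, ∑ i ∈ Finset.range (Dg d + 1),
      MvPowerSeries.coeff d (e i * (b0 + z') ^ i) = 0 := by
    intro d
    rw [← hzeq]
    exact hsum d
  have hcl1 := fun d => claim1 c e b0 z' hb0c hz'c hsum' d
  have hg : ∀ k, gg c e b0 k = 0 := by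
    intro k
    induction k using Nat.strong_induction_on with
    | _ k IH =>
    have hside : ∀ d : Fin n →₀ ℕ, Wt c d = k * m → ∀ j ∈ Finset.range (Dg d + 1), j ≠ k →
        MvPowerSeries.coeff d (gg c e b0 j * z' ^ j) = 0 := by
      intro d hWd j hj hjk
      rcases lt_or_gt_of_ne hjk with hlt | hgt
      · rw [IH j hlt, zero_mul, map_zero]
      · rw [MvPowerSeries.coeff_mul]
        apply Finset.sum_eq_zero
        rintro ⟨u, v⟩ hp
        rw [Finset.HasAntidiagonal.mem_antidiagonal] at hp
        have hW : Wt c u + Wt c v = Wt c d := by rw [← Wt_add, hp]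
        have hkj : k * m < j * m := mul_lt_mul_of_pos_right hgt hm0
        rw [(hPP j).1 v (by omega), mul_zero]
    have hstep : ∀ d : Fin n →₀ ℕ, Wt c d = k * m →
        MvPowerSeries.coeff d (gg c e b0 k * z' ^ k) = 0 := by
      intro d hWd
      have hkmem : k ∈ Finset.range (Dg d + 1) := by
        rw [Finset.mem_range]
        have h1 : k ≤ k * m := Nat.le_mul_of_pos_right k hm0
        have h2 : Wt c d ≤ Dg d := Wt_le_Dg c d
        omega
      have h0 := hcl1 d
      rwa [Finset.sum_eq_single_of_mem k hkmem (hside d hWd)] at h0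
    have hzmk : gg c e b0 k * zm ^ k = 0 := by
      ext d
      rw [map_zero]
      by_cases hWd : Wt c d = k * m
      · rw [← hstep d hWd, MvPowerSeries.coeff_mul, MvPowerSeries.coeff_mul]
        apply Finset.sum_congr rfl
        rintro ⟨u, v⟩ hp
        rw [Finset.HasAntidiagonal.mem_antidiagonal] at hp
        have hW : Wt c u + Wt c v = Wt c d := by rw [← Wt_add, hp]
        by_cases hu : Wt c u = 0
        · rw [(hPP k).2.2 v (by omega)]
        · rw [gg_low heL hb0L k u hu, zero_mul, zero_mul]
      · rw [MvPowerSeries.coeff_mul]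
        apply Finset.sum_eq_zero
        rintro ⟨u, v⟩ hp
        rw [Finset.HasAntidiagonal.mem_antidiagonal] at hp
        have hW : Wt c u + Wt c v = Wt c d := by rw [← Wt_add, hp]
        by_cases hu : Wt c u = 0
        · rw [(hPP k).2.1 v (by omega), mul_zero]
        · rw [gg_low heL hb0L k u hu, zero_mul]
    rcases mul_eq_zero.mp hzmk with h | h
    · exact h
    · exact absurd h (pow_ne_zero k hzmne)
  have he0 : ∀ N, ∀ d : Fin n →₀ ℕ, Dg d < N → ∀ i, MvPowerSeries.coeff d (e i) = 0 := by
    intro N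
    induction N with
    | zero => exact fun d h => absurd h (Nat.not_lt_zero _)
    | succ N IH =>
      intro d hdN i
      have h0 : MvPowerSeries.coeff d (gg c e b0 i) = 0 := by rw [hg i, map_zero]
      rw [coeff_gg] at h0
      have hother : ∀ i' ∈ Finset.range (Dg d + i + 1), i' ≠ i →
          (i'.choose i : ℂ) * MvPowerSeries.coeff d (e i' * b0 ^ (i' - i)) = 0 := by
        intro i' hi' hii
        rcases lt_or_gt_of_ne hii with hlt | hgt
        · rw [Nat.choose_eq_zero_of_lt hlt, Nat.cast_zero, zero_mul]
        · have hz' : MvPowerSeries.coeff d (e i' * b0 ^ (i' - i)) = 0 := by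
            rw [MvPowerSeries.coeff_mul]
            apply Finset.sum_eq_zero
            rintro ⟨u, v⟩ hp
            rw [Finset.HasAntidiagonal.mem_antidiagonal] at hp
            have hD : Dg u + Dg v = Dg d := by rw [← Dg_add, hp]
            by_cases hv : v = 0
            · have hbv : MvPowerSeries.coeff v (b0 ^ (i' - i)) = 0 := by
                rw [hv, MvPowerSeries.coeff_zero_eq_constantCoeff, map_pow,
                  ← MvPowerSeries.coeff_zero_eq_constantCoeff, hb0c]
                exact zero_pow (by omega)
              rw [hbv, mul_zero]
            · have hvD : Dg v ≠ 0 := fun hh => hv (Dg_eq_zero v hh)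
              rw [IH u (by omega) i', zero_mul]
          rw [hz', mul_zero]
      rw [Finset.sum_eq_single_of_mem i (by rw [Finset.mem_range]; omega) hother] at h0
      rw [Nat.choose_self, Nat.cast_one, one_mul, Nat.sub_self, pow_zero, mul_one] at h0
      exact h0
  obtain ⟨i, hi⟩ := hne
  apply hi
  ext dd
  rw [he0 (Dg dd + 1) dd (by omega) i, map_zero]
end

section
/- Let H = {v ∈ ℤ^r : v·C_i ≥ 0 for 1 ≤ i ≤ s} where C₁,…,C_s ∈ ℤ^r. Then H is a finitely generated commutative monoid (Gordan's Lemma). -/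
open AddSubmonoid Finset

/-- If a set of ℕ-vectors is closed under (dominated) subtraction, it is generated,
as an additive monoid, by a finite set of its elements (its minimal nonzero elements,
finite by Dickson's lemma). -/
lemma gordan_aux {ι : Type} [Finite ι] (S : Set (ι → ℕ))
    (hS : ∀ a ∈ S, ∀ b ∈ S, b ≤ a → a - b ∈ S) :
    ∃ W : Finset (ι → ℕ), ↑W ⊆ S ∧
      ∀ a ∈ S, a ∈ AddSubmonoid.closure (W : Set (ι → ℕ)) := by
  classical
  cases nonempty_fintype ι
  set M : Set (ι → ℕ) := {a | a ∈ S ∧ a ≠ 0 ∧ ∀ b ∈ S, b ≠ 0 → b ≤ a → b = a} with hMdef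
  have hanti : IsAntichain (· ≤ ·) M := by
    intro a ha b hb hne hle
    exact hne (hb.2.2 a ha.1 ha.2.1 hle)
  have hfin : M.Finite :=
    hanti.finite_of_partiallyWellOrderedOn (Set.isPWO_of_wellQuasiOrderedLE M)
  refine ⟨hfin.toFinset, ?_, ?_⟩
  · intro a ha
    exact (hfin.mem_toFinset.mp ha).1
  · have main : ∀ n : ℕ, ∀ a ∈ S, ∑ i, a i = n →
        a ∈ AddSubmonoid.closure (↑hfin.toFinset : Set (ι → ℕ)) := by
      intro n
      induction n using Nat.strong_induction_on with
      | _ n ih =>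
        intro a haS hsum
        by_cases ha0 : a = 0
        · simpa [ha0] using zero_mem _
        by_cases hmin : ∀ b ∈ S, b ≠ 0 → b ≤ a → b = a
        · exact AddSubmonoid.subset_closure (by
            rw [Set.Finite.coe_toFinset]
            exact ⟨haS, ha0, hmin⟩)
        · push_neg at hmin
          obtain ⟨b, hbS, hb0, hble, hbne⟩ := hmin
          have hab : a - b ∈ S := hS a haS b hbS hble
          have hsplit : ∑ i, b i + ∑ i, (a - b) i = ∑ i, a i := by
            rw [← Finset.sum_add_distrib]
            exact Finset.sum_congr rfl fun i _ =>
              show b i + (a i - b i) = a i from Nat.add_sub_cancel' (hble i)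
          have hbpos : 0 < ∑ i, b i := by
            obtain ⟨i, hi⟩ := Function.ne_iff.mp hb0
            exact Finset.sum_pos' (fun _ _ => Nat.zero_le _)
              ⟨i, Finset.mem_univ i, Nat.pos_of_ne_zero hi⟩
          have habpos : 0 < ∑ i, (a - b) i := by
            obtain ⟨i, hi⟩ := Function.ne_iff.mp hbne
            exact Finset.sum_pos' (fun _ _ => Nat.zero_le _)
              ⟨i, Finset.mem_univ i,
                show 0 < a i - b i from Nat.sub_pos_of_lt ((hble i).lt_of_ne hi)⟩
          have hb_mem := ih (∑ i, b i) (by omega) b hbS rfl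
          have hab_mem := ih (∑ i, (a - b) i) (by omega) (a - b) hab rfl
          have : b + (a - b) = a := by
            funext i
            exact Nat.add_sub_cancel' (hble i)
          rw [← this]
          exact add_mem hb_mem hab_mem
    exact fun a ha => main (∑ i, a i) a ha rfl

/-- **Gordan's Lemma.** Let `H = {v ∈ ℤ^r : v·Cᵢ ≥ 0 for 1 ≤ i ≤ s}` for integer vectors
`C₁,…,C_s`.  Then `H` is a finitely generated commutative monoid. -/
theorem gordan_lemma (r s : ℕ) (C : Fin s → Fin r → ℤ) :
    ∃ W : Finset (Fin r → ℤ),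
      (∀ w ∈ W, ∀ i, 0 ≤ ∑ j, w j * C i j) ∧
      ∀ v : Fin r → ℤ, (∀ i, 0 ≤ ∑ j, v j * C i j) →
        v ∈ AddSubmonoid.closure (W : Set (Fin r → ℤ)) := by
  classical
  set ι := Fin r ⊕ Fin r ⊕ Fin s with hι
  -- the monoid hom sending (p, n, t) to p - n
  set F : (ι → ℕ) →+ (Fin r → ℤ) :=
    { toFun := fun x j => (x (Sum.inl j) : ℤ) - (x (Sum.inr (Sum.inl j)) : ℤ)
      map_zero' := by funext j; simp
      map_add' := fun a b => by funext j; push_cast; simp [Pi.add_apply]; ring } with hF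
  -- the solution set with slack variables
  set S : Set (ι → ℕ) :=
    {x | ∀ i, ∑ j, F x j * C i j = (x (Sum.inr (Sum.inr i)) : ℤ)} with hSdef
  have hsub : ∀ a ∈ S, ∀ b ∈ S, b ≤ a → a - b ∈ S := by
    intro a haS b hbS hle i
    have hFab : F (a - b) = F a - F b := by
      funext j
      have h1 := hle (Sum.inl j)
      have h2 := hle (Sum.inr (Sum.inl j))
      simp only [hF, AddMonoidHom.coe_mk, ZeroHom.coe_mk, Pi.sub_apply]
      push_cast [Nat.cast_sub h1, Nat.cast_sub h2]
      ring
    rw [hFab]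
    have := hle (Sum.inr (Sum.inr i))
    calc ∑ j, (F a - F b) j * C i j
        = ∑ j, (F a j * C i j - F b j * C i j) := by
          refine Finset.sum_congr rfl fun j _ => by simp [Pi.sub_apply]; ring
      _ = ∑ j, F a j * C i j - ∑ j, F b j * C i j := Finset.sum_sub_distrib _ _
      _ = (a (Sum.inr (Sum.inr i)) : ℤ) - (b (Sum.inr (Sum.inr i)) : ℤ) := by
          rw [haS i, hbS i]
      _ = ((a - b) (Sum.inr (Sum.inr i)) : ℤ) := by
          simp [Pi.sub_apply, Nat.cast_sub this]
  obtain ⟨W0, hW0S, hW0gen⟩ := gordan_aux S hsub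
  refine ⟨W0.image F, ?_, ?_⟩
  · intro w hw i
    obtain ⟨x, hx, rfl⟩ := Finset.mem_image.mp hw
    rw [hW0S hx i]
    exact Int.natCast_nonneg _
  · intro v hv
    set x : ι → ℕ := fun k =>
      match k with
      | Sum.inl j => (v j).toNat
      | Sum.inr (Sum.inl j) => (-(v j)).toNat
      | Sum.inr (Sum.inr i) => (∑ j, v j * C i j).toNat with hx
    have hFx : F x = v := by
      funext j
      simp only [hF, AddMonoidHom.coe_mk, ZeroHom.coe_mk, hx]
      omega
    have hxS : x ∈ S := by
      intro i
      rw [hFx]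
      exact (Int.toNat_of_nonneg (hv i)).symm
    have hx_mem := hW0gen x hxS
    have : F x ∈ (AddSubmonoid.closure (W0 : Set (ι → ℕ))).map F :=
      AddSubmonoid.mem_map_of_mem F hx_mem
    rw [AddMonoidHom.map_mclosure] at this
    rw [← hFx]
    simpa [Finset.coe_image] using this
end

section
/- Let I be a submonoid of ℚ^r and H a finitely generated submonoid of I with n̄·x ∈ H for all x ∈ I, where n̄ is a fixed positive integer. If w₁,…,w_ℓ generate I as a monoid, then the finite set {a₁w₁ + ⋯ + a_ℓ w_ℓ : a_i ∈ ℕ, 0 ≤ a_i ≤ n̄ for all i} generates I as a module over H (every element of I is the sum of an element of this set and an element of H). -/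
/-- Let `I` be a submonoid of `ℚ^r` generated by `w₁,…,w_ℓ`, and `H ≤ I` a finitely
generated submonoid such that `n̄·x ∈ H` for all `x ∈ I`, where `n̄ > 0`.  Then the finite
set `{a₁w₁ + ⋯ + a_ℓ w_ℓ : 0 ≤ aᵢ ≤ n̄}` generates `I` as a module over `H`: every element
of `I` is the sum of such an element and an element of `H`. -/
theorem module_generation_over_submonoid (r ℓ nbar : ℕ) (hnbar : 0 < nbar)
    (I H : AddSubmonoid (Fin r → ℚ)) (hHI : H ≤ I) (hHfg : H.FG)
    (hmul : ∀ x ∈ I, nbar • x ∈ H)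
    (w : Fin ℓ → (Fin r → ℚ)) (hw : ∀ j, w j ∈ I)
    (hgen : ∀ v ∈ I, v ∈ AddSubmonoid.closure (Set.range w)) :
    ∀ v ∈ I, ∃ a : Fin ℓ → ℕ, (∀ j, a j ≤ nbar) ∧
      ∃ h ∈ H, v = (∑ j, a j • w j) + h := by
  intro v hv
  -- first, v is an ℕ-combination of the w j
  have key : ∀ x ∈ AddSubmonoid.closure (Set.range w), ∃ c : Fin ℓ → ℕ, x = ∑ j, c j • w j := by
    intro x hx
    induction hx using AddSubmonoid.closure_induction with
    | mem x hx =>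
      obtain ⟨j, rfl⟩ := hx
      exact ⟨Pi.single j 1, by simp [Pi.single_apply, Finset.sum_ite_eq']⟩
    | zero => exact ⟨0, by simp⟩
    | add x y _ _ hx hy =>
      obtain ⟨c, rfl⟩ := hx
      obtain ⟨d, rfl⟩ := hy
      exact ⟨c + d, by simp [add_smul, Finset.sum_add_distrib]⟩
  obtain ⟨c, rfl⟩ := key v (hgen v hv)
  refine ⟨fun j => c j % nbar, fun j => le_of_lt (Nat.mod_lt _ hnbar), 
    ∑ j, (c j / nbar) • (nbar • w j), ?_, ?_⟩
  · exact AddSubmonoid.sum_mem H fun j _ =>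
      AddSubmonoid.nsmul_mem H (hmul _ (hw j)) _
  · rw [← Finset.sum_add_distrib]
    refine Finset.sum_congr rfl fun j _ => ?_
    rw [smul_smul, ← add_smul, Nat.mod_add_div']
end

section
/- Let φ: Y → X be a holomorphic map between connected complex manifolds with dim X = n, and suppose the set Z = {q ∈ Y : rank(dφ_q) < n} is a proper closed subset of Y (i.e., φ has generic rank n). Let Y_ℝ ⊆ Y be a totally real connected real-analytic submanifold of Y of real dimension equal to dim_ℂ Y such that Y is a complexification of Y_ℝ. Then Z ∩ Y_ℝ is nowhere dense in Y_ℝ; in particular the restriction of φ to Y_ℝ has a point where its differential has rank n. -/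
set_option maxHeartbeats 1000000

open Metric Set Function Filter Topology

section Auxiliary

lemma update_eq_line {m : ℕ} (x : Fin m → ℂ) (j : Fin m) (z : ℂ) :
    Function.update x j z = x + (z - x j) • (Pi.single j 1 : Fin m → ℂ) := by
  funext i
  rcases eq_or_ne i j with rfl | h
  · simp
  · simp [Function.update_of_ne h, Pi.single_apply, h]

lemma hasDerivAt_slice {m : ℕ} {V : Type*} [NormedAddCommGroup V] [NormedSpace ℂ V]
    (φ : (Fin m → ℂ) → V) (x : Fin m → ℂ) (j : Fin m) (h : DifferentiableAt ℂ φ x) :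
    HasDerivAt (fun ζ : ℂ => φ (Function.update x j ζ))
      (fderiv ℂ φ x (Pi.single j 1)) (x j) := by
  have hc : HasDerivAt (fun z : ℂ => x + (z - x j) • (Pi.single j 1 : Fin m → ℂ))
      (Pi.single j 1) (x j) := by
    have h1 : HasDerivAt (fun z : ℂ => z - x j) 1 (x j) := (hasDerivAt_id _).sub_const _
    simpa using (h1.smul_const ((Pi.single j 1 : Fin m → ℂ))).const_add x
  have h2 : HasDerivAt (fun z : ℂ => φ (x + (z - x j) • (Pi.single j 1 : Fin m → ℂ)))
      (fderiv ℂ φ x (Pi.single j 1)) (x j) := by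
    have hφx : HasFDerivAt φ (fderiv ℂ φ x) (x + ((x j) - x j) • (Pi.single j 1 : Fin m → ℂ)) := by
      simpa using h.hasFDerivAt
    have := hφx.comp_hasDerivAt (x j) hc
    exact this
  have : (fun ζ : ℂ => φ (Function.update x j ζ))
      = fun z : ℂ => φ (x + (z - x j) • (Pi.single j 1 : Fin m → ℂ)) := by
    funext z; rw [update_eq_line]
  rw [this]
  exact h2

lemma update_mem_closedBall {m : ℕ} {x₀ x : Fin m → ℂ} {j : Fin m} {ζ : ℂ} {ρ : ℝ}
    (hx : x ∈ ball x₀ ρ) (hζ : ζ ∈ ball (x₀ j) ρ) :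
    Function.update x j ζ ∈ closedBall x₀ ρ := by
  have hρ : 0 ≤ ρ := (dist_nonneg.trans_lt (mem_ball.1 hx)).le
  rw [mem_closedBall]
  rw [mem_ball] at hx hζ
  refine (dist_pi_le_iff hρ).2 fun i => ?_
  rcases eq_or_ne i j with rfl | h
  · simpa [Function.update_self] using hζ.le
  · rw [Function.update_of_ne h]
    exact (dist_le_pi_dist x x₀ i).trans hx.le

lemma continuousOn_partial {m n : ℕ} (φ : (Fin m → ℂ) → (Fin n → ℂ)) (U : Set (Fin m → ℂ))
    (hU : IsOpen U) (hφ : DifferentiableOn ℂ φ U) (j : Fin m) :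
    ContinuousOn (fun x => fderiv ℂ φ x (Pi.single j 1)) U := by
  intro x₀ hx₀
  apply ContinuousAt.continuousWithinAt
  obtain ⟨ε, hε, hεU⟩ := Metric.isOpen_iff.1 hU x₀ hx₀
  set ρ := ε / 2 with hρdef
  have hρ : 0 < ρ := by positivity
  have hKU : closedBall x₀ ρ ⊆ U := fun y hy =>
    hεU (lt_of_le_of_lt (mem_closedBall.1 hy) (by simp [hρdef]; linarith))
  set s : Set ℂ := ball (x₀ j) ρ with hsdef
  set Ψ : (Fin m → ℂ) → ℂ → (Fin n → ℂ) := fun x ζ => φ (Function.update x j ζ) with hΨdef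
  -- membership
  have hmem : ∀ x ∈ ball x₀ ρ, ∀ ζ ∈ s, Function.update x j ζ ∈ closedBall x₀ ρ :=
    fun x hx ζ hζ => update_mem_closedBall hx hζ
  -- differentiability of slices
  have hdiff : ∀ x ∈ ball x₀ ρ, DifferentiableOn ℂ (Ψ x) s := by
    intro x hx ζ hζ
    have hxζ : Function.update x j ζ ∈ U := hKU (hmem x hx ζ hζ)
    have hd : DifferentiableAt ℂ φ (Function.update x j ζ) :=
      (hφ.differentiableAt (hU.mem_nhds hxζ))
    have h1 := hasDerivAt_slice φ (Function.update x j ζ) j hd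
    have h2 : (fun ζ' : ℂ => φ (Function.update (Function.update x j ζ) j ζ')) = Ψ x := by
      funext ζ'; simp [hΨdef, Function.update_idem]
    rw [h2] at h1
    have h3 : Function.update x j ζ j = ζ := Function.update_self _ _ _
    rw [h3] at h1
    exact h1.differentiableAt.differentiableWithinAt
  -- uniform convergence of slices
  have huc : UniformContinuousOn φ (closedBall x₀ ρ) :=
    (isCompact_closedBall x₀ ρ).uniformContinuousOn_of_continuous
      (hφ.continuousOn.mono hKU)
  have htuo : TendstoUniformlyOn Ψ (Ψ x₀) (𝓝 x₀) s := by
    rw [Metric.tendstoUniformlyOn_iff]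
    intro ε' hε'
    obtain ⟨δ, hδ, hδ'⟩ := Metric.uniformContinuousOn_iff.1 huc ε' hε'
    filter_upwards [Metric.ball_mem_nhds x₀ (lt_min hρ hδ)] with x hx
    intro ζ hζ
    have hx1 : x ∈ ball x₀ ρ := ball_subset_ball (min_le_left _ _) hx
    have h1 : Function.update x₀ j ζ ∈ closedBall x₀ ρ := hmem x₀ (mem_ball_self hρ) ζ hζ
    have h2 : Function.update x j ζ ∈ closedBall x₀ ρ := hmem x hx1 ζ hζ
    have h3 : dist (Function.update x₀ j ζ) (Function.update x j ζ) ≤ dist x₀ x := by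
      refine (dist_pi_le_iff dist_nonneg).2 fun i => ?_
      rcases eq_or_ne i j with rfl | h
      · simpa using dist_nonneg
      · rw [Function.update_of_ne h, Function.update_of_ne h]
        exact dist_le_pi_dist x₀ x i
    have h4 : dist x₀ x < δ := by
      rw [dist_comm]; exact (mem_ball.1 hx).trans_le (min_le_right _ _)
    exact hδ' _ h1 _ h2 (h3.trans_lt h4)
  -- convergence of derivatives
  have hF : ∀ᶠ x in 𝓝 x₀, DifferentiableOn ℂ (Ψ x) s := by
    filter_upwards [Metric.ball_mem_nhds x₀ hρ] with x hx using hdiff x hx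
  have hderiv := (htuo.tendstoLocallyUniformlyOn).deriv hF isOpen_ball
  have hΨ₀ : DifferentiableOn ℂ (Ψ x₀) s := hdiff x₀ (mem_ball_self hρ)
  have hcont : ContinuousOn (deriv (Ψ x₀)) s :=
    ((hΨ₀.analyticOnNhd isOpen_ball).deriv).continuousOn
  have hxj : x₀ j ∈ s := mem_ball_self hρ
  have hg : Tendsto (fun x : Fin m → ℂ => x j) (𝓝 x₀) (𝓝[s] (x₀ j)) := by
    rw [tendsto_nhdsWithin_iff]
    refine ⟨(continuous_apply j).tendsto x₀, ?_⟩
    have : IsOpen ((fun x : Fin m → ℂ => x j) ⁻¹' s) := isOpen_ball.preimage (continuous_apply j)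
    filter_upwards [this.mem_nhds (by simpa using hxj)] with x hx using hx
  have hkey : Tendsto (fun x => deriv (Ψ x) (x j)) (𝓝 x₀) (𝓝 (deriv (Ψ x₀) (x₀ j))) :=
    hderiv.tendsto_comp (hcont.continuousWithinAt hxj) hxj hg
  -- identify with fderiv
  have hid : ∀ x ∈ ball x₀ ρ, deriv (Ψ x) (x j) = fderiv ℂ φ x (Pi.single j 1) := by
    intro x hx
    have hxU : x ∈ U := hKU (ball_subset_closedBall hx)
    exact (hasDerivAt_slice φ x j (hφ.differentiableAt (hU.mem_nhds hxU))).deriv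
  have hval : deriv (Ψ x₀) (x₀ j) = fderiv ℂ φ x₀ (Pi.single j 1) :=
    hid x₀ (mem_ball_self hρ)
  rw [hval] at hkey
  refine hkey.congr' ?_
  filter_upwards [Metric.ball_mem_nhds x₀ hρ] with x hx using hid x hx

lemma continuousOn_fderiv {m n : ℕ} (φ : (Fin m → ℂ) → (Fin n → ℂ)) (U : Set (Fin m → ℂ))
    (hU : IsOpen U) (hφ : DifferentiableOn ℂ φ U) :
    ContinuousOn (fderiv ℂ φ) U := by
  have hrepr : ∀ x ∈ U, fderiv ℂ φ x
      = ∑ j : Fin m, ContinuousLinearMap.smulRight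
          (ContinuousLinearMap.proj (R := ℂ) (φ := fun _ : Fin m => ℂ) j)
          (fderiv ℂ φ x (Pi.single j 1)) := by
    intro x hx
    apply ContinuousLinearMap.ext
    intro v
    rw [ContinuousLinearMap.sum_apply]
    simp only [ContinuousLinearMap.smulRight_apply, ContinuousLinearMap.proj_apply]
    have hv : v = ∑ j : Fin m, (v j) • (Pi.single j 1 : Fin m → ℂ) := by
      have : ∀ j : Fin m, (v j) • (Pi.single j 1 : Fin m → ℂ) = Pi.single j (v j) := by
        intro j; funext i
        rcases eq_or_ne i j with rfl | h
        · simp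
        · simp [Pi.single_apply, h]
      simp_rw [this]
      exact (Finset.univ_sum_single v).symm
    conv_lhs => rw [hv]
    rw [map_sum]
    exact Finset.sum_congr rfl fun j _ => by rw [map_smul]
  refine ContinuousOn.congr ?_ hrepr
  refine continuousOn_finset_sum _ fun j _ => ?_
  exact ((ContinuousLinearMap.smulRightL ℂ (Fin m → ℂ) (Fin n → ℂ)
    (ContinuousLinearMap.proj j)).continuous).comp_continuousOn
    (continuousOn_partial φ U hU hφ j)

lemma diffOn_line_fderiv {m n : ℕ} (φ : (Fin m → ℂ) → (Fin n → ℂ)) (U : Set (Fin m → ℂ))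
    (hU : IsOpen U) (hφ : DifferentiableOn ℂ φ U) (v p w : Fin m → ℂ) :
    DifferentiableOn ℂ (fun z : ℂ => fderiv ℂ φ (p + z • w) v) {z : ℂ | p + z • w ∈ U} := by
  have hc : ContinuousOn (fderiv ℂ φ) U := continuousOn_fderiv φ U hU hφ
  set L : ℂ → (Fin m → ℂ) := fun z => p + z • w with hL
  have hLcont : Continuous L := continuous_const.add (continuous_id.smul continuous_const)
  have hLdiff : Differentiable ℂ L := (differentiable_id.smul_const w).const_add p
  intro z₀ hz₀
  apply DifferentiableAt.differentiableWithinAt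
  set x₁ : Fin m → ℂ := L z₀ with hx₁
  obtain ⟨ε, hε, hεU⟩ := Metric.isOpen_iff.1 hU x₁ hz₀
  set ρ := ε / 3 with hρdef
  have hρ : 0 < ρ := by positivity
  have hKU : closedBall x₁ (2 * ρ) ⊆ U := fun y hy =>
    hεU (lt_of_le_of_lt (mem_closedBall.1 hy) (by rw [hρdef]; linarith))
  set r := ρ / (‖w‖ + 1) with hr
  have hrpos : 0 < r := by positivity
  have hLz : ∀ z ∈ ball z₀ r, L z ∈ closedBall x₁ ρ := by
    intro z hz
    rw [mem_closedBall, dist_eq_norm]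
    have : L z - x₁ = (z - z₀) • w := by
      simp only [hL, hx₁]; module
    rw [this, norm_smul]
    have h1 : ‖z - z₀‖ < r := by rw [← dist_eq_norm]; exact hz
    have h2 : ‖z - z₀‖ * ‖w‖ ≤ r * ‖w‖ :=
      mul_le_mul_of_nonneg_right h1.le (norm_nonneg w)
    refine h2.trans ?_
    rw [hr, div_mul_eq_mul_div, div_le_iff₀ (by positivity)]
    nlinarith [norm_nonneg w, hρ.le]
  have hmem2 : ∀ t : ℂ, ‖t‖ * ‖v‖ ≤ ρ → ∀ z ∈ ball z₀ r, L z + t • v ∈ closedBall x₁ (2 * ρ) := by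
    intro t ht z hz
    rw [mem_closedBall]
    calc dist (L z + t • v) x₁ ≤ dist (L z + t • v) (L z) + dist (L z) x₁ := dist_triangle _ _ _
    _ ≤ ‖t‖ * ‖v‖ + ρ := by
        refine add_le_add ?_ (hLz z hz)
        rw [dist_eq_norm, add_sub_cancel_left, norm_smul]
    _ ≤ 2 * ρ := by linarith
  set g : ℂ → ℂ → (Fin n → ℂ) := fun t z => t⁻¹ • (φ (L z + t • v) - φ (L z)) with hg
  have hsmall : ∀ᶠ t : ℂ in 𝓝[≠] 0, ‖t‖ * (‖v‖ + 1) < ρ := by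
    apply eventually_nhdsWithin_of_eventually_nhds
    have : Continuous fun t : ℂ => ‖t‖ * (‖v‖ + 1) := continuous_norm.mul continuous_const
    have h0 : ‖(0:ℂ)‖ * (‖v‖ + 1) < ρ := by simpa using hρ
    exact this.continuousAt.eventually_lt continuousAt_const h0
  have hgd : ∀ᶠ t : ℂ in 𝓝[≠] 0, DifferentiableOn ℂ (g t) (ball z₀ r) := by
    filter_upwards [hsmall] with t ht
    have htv : ‖t‖ * ‖v‖ ≤ ρ := by nlinarith [norm_nonneg t]
    intro z hz
    apply DifferentiableAt.differentiableWithinAt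
    have h1 : DifferentiableAt ℂ (fun z : ℂ => φ (L z + t • v)) z := by
      have hin : L z + t • v ∈ U := hKU (hmem2 t htv z hz)
      exact (hφ.differentiableAt (hU.mem_nhds hin)).comp z
        ((hLdiff z).add_const (t • v))
    have h2 : DifferentiableAt ℂ (fun z : ℂ => φ (L z)) z := by
      have hin : L z ∈ U := hKU (closedBall_subset_closedBall (by linarith) (hLz z hz))
      exact (hφ.differentiableAt (hU.mem_nhds hin)).comp z (hLdiff z)
    exact (h1.sub h2).const_smul t⁻¹
  have htu : TendstoUniformlyOn g (fun z => fderiv ℂ φ (L z) v) (𝓝[≠] 0) (ball z₀ r) := by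
    rw [Metric.tendstoUniformlyOn_iff]
    intro ε' hε'
    have huc : UniformContinuousOn (fderiv ℂ φ) (closedBall x₁ (2 * ρ)) :=
      (isCompact_closedBall _ _).uniformContinuousOn_of_continuous (hc.mono hKU)
    set ε'' := ε' / (2 * (‖v‖ + 1)) with hε''def
    have hε'' : 0 < ε'' := by positivity
    obtain ⟨δ, hδ, hδ'⟩ := Metric.uniformContinuousOn_iff.1 huc ε'' hε''
    have hev : ∀ᶠ t : ℂ in 𝓝[≠] 0, ‖t‖ * (‖v‖ + 1) < min δ ρ ∧ t ≠ 0 := by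
      refine Filter.Eventually.and ?_ (eventually_mem_nhdsWithin.mono fun t ht => ht)
      apply eventually_nhdsWithin_of_eventually_nhds
      have : Continuous fun t : ℂ => ‖t‖ * (‖v‖ + 1) := continuous_norm.mul continuous_const
      exact this.continuousAt.eventually_lt continuousAt_const (by simpa using lt_min hδ hρ)
    filter_upwards [hev] with t ⟨ht, ht0⟩
    intro z hz
    set x : Fin m → ℂ := L z with hx
    have hxK : x ∈ closedBall x₁ ρ := hLz z hz
    have htv : ‖t‖ * ‖v‖ < min δ ρ := by nlinarith [norm_nonneg t, norm_nonneg v, ht]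
    have htvρ : ‖t‖ * ‖v‖ ≤ ρ := htv.le.trans (min_le_right _ _)
    have hxU : x ∈ U := hKU (closedBall_subset_closedBall (by linarith) hxK)
    have hcbK : closedBall x (‖t‖ * ‖v‖) ⊆ closedBall x₁ (2 * ρ) := by
      intro y hy
      rw [mem_closedBall] at hy ⊢
      calc dist y x₁ ≤ dist y x + dist x x₁ := dist_triangle _ _ _
      _ ≤ ‖t‖ * ‖v‖ + ρ := add_le_add hy hxK
      _ ≤ 2 * ρ := by linarith
    have hcbU : closedBall x (‖t‖ * ‖v‖) ⊆ U := hcbK.trans hKU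
    -- mean value estimate
    have hbound : ∀ y ∈ closedBall x (‖t‖ * ‖v‖),
        ‖fderiv ℂ φ y - fderiv ℂ φ x‖ ≤ ε'' := by
      intro y hy
      have h1 : dist (fderiv ℂ φ y) (fderiv ℂ φ x) < ε'' :=
        hδ' _ (hcbK hy) _ (hcbK (mem_closedBall_self (by positivity)))
          ((mem_closedBall.1 hy).trans_lt (htv.trans_le (min_le_left _ _)))
      rw [dist_eq_norm] at h1
      exact h1.le
    have hder : ∀ y ∈ closedBall x (‖t‖ * ‖v‖),
        HasFDerivWithinAt (fun u => φ u - fderiv ℂ φ x u)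
          (fderiv ℂ φ y - fderiv ℂ φ x) (closedBall x (‖t‖ * ‖v‖)) y := by
      intro y hy
      exact ((hφ.differentiableAt (hU.mem_nhds (hcbU hy))).hasFDerivAt.sub
        ((fderiv ℂ φ x).hasFDerivAt)).hasFDerivWithinAt
    have hxe : x + t • v ∈ closedBall x (‖t‖ * ‖v‖) := by
      rw [mem_closedBall, dist_eq_norm, add_sub_cancel_left, norm_smul]
    have hmv := (convex_closedBall x (‖t‖ * ‖v‖)).norm_image_sub_le_of_norm_hasFDerivWithin_le
      hder hbound (mem_closedBall_self (by positivity)) hxe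
    -- hmv : ‖(φ (x+t•v) - fderiv x (x+t•v)) - (φ x - fderiv x x)‖ ≤ ε'' * ‖x + t•v - x‖
    have hmv2 : ‖φ (x + t • v) - φ x - fderiv ℂ φ x (t • v)‖ ≤ ε'' * (‖t‖ * ‖v‖) := by
      have he : (φ (x + t • v) - fderiv ℂ φ x (x + t • v)) - (φ x - fderiv ℂ φ x x)
          = φ (x + t • v) - φ x - fderiv ℂ φ x (t • v) := by
        rw [map_add]; abel
      rw [he] at hmv
      simpa [add_sub_cancel_left, norm_smul] using hmv
    rw [dist_eq_norm]
    have hid : fderiv ℂ φ (L z) v - g t z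
        = (-t⁻¹) • (φ (x + t • v) - φ x - fderiv ℂ φ x (t • v)) := by
      rw [hg]
      simp only [smul_sub, smul_smul, neg_smul]
      rw [map_smul]
      rw [smul_smul, inv_mul_cancel₀ ht0, one_smul]
      simp only [← hx]
      abel
    rw [hid, norm_smul]
    have : ‖(-t⁻¹ : ℂ)‖ = ‖t‖⁻¹ := by rw [norm_neg, norm_inv]
    rw [this]
    have htpos : 0 < ‖t‖ := norm_pos_iff.2 ht0
    calc ‖t‖⁻¹ * ‖φ (x + t • v) - φ x - fderiv ℂ φ x (t • v)‖
        ≤ ‖t‖⁻¹ * (ε'' * (‖t‖ * ‖v‖)) := by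
          exact mul_le_mul_of_nonneg_left hmv2 (by positivity)
    _ = (‖t‖⁻¹ * ‖t‖) * (ε'' * ‖v‖) := by ring
    _ = ε'' * ‖v‖ := by rw [inv_mul_cancel₀ htpos.ne', one_mul]
    _ < ε' := by
        rw [hε''def]
        rw [div_mul_eq_mul_div, div_lt_iff₀ (by positivity)]
        nlinarith [norm_nonneg v]
  have := (htu.tendstoLocallyUniformlyOn).differentiableOn hgd isOpen_ball
  exact (this z₀ (mem_ball_self hrpos)).differentiableAt
    (isOpen_ball.mem_nhds (mem_ball_self hrpos))

lemma aux_vanish {m : ℕ} (F : (Fin m → ℂ) → ℂ) (q : Fin m → ℂ) (r : ℝ) (hr : 0 < r)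
    (hFline : ∀ p w : Fin m → ℂ, DifferentiableOn ℂ (fun z : ℂ => F (p + z • w))
      {z : ℂ | p + z • w ∈ ball q r})
    (hq : ∀ i, (q i).im = 0)
    (h0 : ∀ x ∈ ball q r, (∀ i, (x i).im = 0) → F x = 0) :
    ∀ x ∈ ball q r, F x = 0 := by
  suffices H : ∀ k : ℕ, ∀ x ∈ ball q r, (∀ i : Fin m, k ≤ (i : ℕ) → (x i).im = 0) → F x = 0 by
    intro x hx
    exact H m x hx fun i hi => absurd hi (by omega)
  intro k
  induction k with
  | zero => exact fun x hx hxr => h0 x hx fun i => hxr i (Nat.zero_le _)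
  | succ k ih =>
    intro x hx hxr
    by_cases hk : k < m
    · set κ : Fin m := ⟨k, hk⟩ with hκ
      set g : ℂ → ℂ := fun z => F (Function.update x κ z) with hgdef
      have hxcoord : ∀ i : Fin m, dist (x i) (q i) < r := (dist_pi_lt_iff hr).1 (mem_ball.1 hx)
      have hmem : ∀ z ∈ ball (q κ) r, Function.update x κ z ∈ ball q r := by
        intro z hz
        rw [mem_ball]
        refine (dist_pi_lt_iff hr).2 fun i => ?_
        rcases eq_or_ne i κ with rfl | h
        · simpa using (mem_ball.1 hz)
        · rw [Function.update_of_ne h]; exact hxcoord i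
      -- g is differentiable on ball (q κ) r
      have hgdiff : DifferentiableOn ℂ g (ball (q κ) r) := by
        have h1 := hFline x (Pi.single κ 1)
        have h2 : DifferentiableOn ℂ (fun z : ℂ => z - x κ) (ball (q κ) r) :=
          (differentiable_id.sub_const _).differentiableOn
        have h3 : ∀ z ∈ ball (q κ) r,
            (fun z : ℂ => z - x κ) z ∈ {z : ℂ | x + z • (Pi.single κ 1 : Fin m → ℂ) ∈ ball q r} := by
          intro z hz
          simp only [mem_setOf_eq]
          rw [← update_eq_line]
          exact hmem z hz
        have := h1.comp h2 h3
        refine this.congr fun z hz => ?_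
        simp only [Function.comp_apply, hgdef]
        rw [update_eq_line]
      have hgan : AnalyticOnNhd ℂ g (ball (q κ) r) := hgdiff.analyticOnNhd isOpen_ball
      -- g vanishes at real points
      have hgz : ∀ z ∈ ball (q κ) r, z.im = 0 → g z = 0 := by
        intro z hz hzim
        refine ih _ (hmem z hz) fun i hi => ?_
        rcases eq_or_ne i κ with rfl | h
        · simpa [Function.update_self] using hzim
        · rw [Function.update_of_ne h]
          refine hxr i ?_
          have h1 : (i : ℕ) ≠ k := fun hc => h (Fin.ext hc)
          omega
      -- frequently zero near q κ
      have hfreq : ∃ᶠ z in 𝓝[≠] (q κ), g z = 0 := by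
        rw [Filter.frequently_iff]
        intro V hV
        obtain ⟨δ, hδ, hδV⟩ := Metric.mem_nhdsWithin_iff.1 hV
        set c : ℝ := min δ r / 2 with hc
        have hcpos : 0 < c := by positivity
        refine ⟨q κ + (c : ℂ), hδV ⟨?_, ?_⟩, ?_⟩
        · rw [mem_ball, dist_eq_norm, add_sub_cancel_left, Complex.norm_real,
            Real.norm_eq_abs, abs_of_pos hcpos]
          have := min_le_left δ r
          rw [hc]; linarith
        · simp only [mem_compl_iff, mem_singleton_iff]
          intro hcon
          have h1 : (c : ℂ) = 0 := by
            have := congrArg (fun w => w - q κ) hcon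
            simpa using this
          exact hcpos.ne' (by exact_mod_cast h1)
        · refine hgz _ ?_ ?_
          · rw [mem_ball, dist_eq_norm, add_sub_cancel_left, Complex.norm_real,
              Real.norm_eq_abs, abs_of_pos hcpos]
            have := min_le_right δ r
            rw [hc]; linarith
          · simp [hq κ]
      have heq : EqOn g 0 (ball (q κ) r) :=
        hgan.eqOn_zero_of_preconnected_of_frequently_eq_zero
          (convex_ball _ _).isPreconnected (mem_ball_self hr) hfreq
      have hxκ : x κ ∈ ball (q κ) r := by rw [mem_ball]; exact hxcoord κ
      have := heq hxκ
      simpa [hgdef, Function.update_eq_self] using this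
    · exact ih x hx fun i hi => absurd hi (by have := i.isLt; omega)

lemma spread_ball {m : ℕ} (F : (Fin m → ℂ) → ℂ) (p : Fin m → ℂ) (R ρ : ℝ) (hρ : 0 < ρ)
    (hρR : ρ ≤ R)
    (hFline : ∀ pp ww : Fin m → ℂ, DifferentiableOn ℂ (fun z : ℂ => F (pp + z • ww))
      {z : ℂ | pp + z • ww ∈ ball p R})
    (h0 : ∀ y ∈ ball p ρ, F y = 0) : ∀ y ∈ ball p R, F y = 0 := by
  intro y hy
  by_cases hyp : y = p
  · exact hyp ▸ h0 p (mem_ball_self hρ)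
  set w : Fin m → ℂ := y - p with hw
  have hw0 : ‖w‖ ≠ 0 := by
    simpa [hw, sub_eq_zero] using hyp
  have hwpos : 0 < ‖w‖ := lt_of_le_of_ne (norm_nonneg w) (Ne.symm hw0)
  have hDeq : {z : ℂ | p + z • w ∈ ball p R} = ball (0 : ℂ) (R / ‖w‖) := by
    ext z
    simp only [mem_setOf_eq, mem_ball, dist_eq_norm, add_sub_cancel_left, sub_zero, norm_smul]
    rw [lt_div_iff₀ hwpos]
  have hdiff := hFline p w
  rw [hDeq] at hdiff
  have han : AnalyticOnNhd ℂ (fun z : ℂ => F (p + z • w)) (ball (0:ℂ) (R / ‖w‖)) :=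
    hdiff.analyticOnNhd isOpen_ball
  have h0mem : (0 : ℂ) ∈ ball (0:ℂ) (R / ‖w‖) := mem_ball_self (div_pos (hρ.trans_le hρR) hwpos)
  have hev : ∀ᶠ z in 𝓝 (0:ℂ), F (p + z • w) = 0 := by
    filter_upwards [Metric.ball_mem_nhds (0:ℂ) (div_pos hρ hwpos)] with z hz
    refine h0 _ ?_
    rw [mem_ball, dist_eq_norm, add_sub_cancel_left, norm_smul]
    rw [mem_ball, dist_zero_right] at hz
    calc ‖z‖ * ‖w‖ < ρ / ‖w‖ * ‖w‖ := by exact mul_lt_mul_of_pos_right hz hwpos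
    _ = ρ := by field_simp
  have hfreq : ∃ᶠ z in 𝓝[≠] (0:ℂ), F (p + z • w) = 0 :=
    ((hev.filter_mono nhdsWithin_le_nhds).frequently)
  have heq : EqOn (fun z : ℂ => F (p + z • w)) 0 (ball (0:ℂ) (R / ‖w‖)) :=
    han.eqOn_zero_of_preconnected_of_frequently_eq_zero
      (convex_ball _ _).isPreconnected h0mem hfreq
  have h1 : (1 : ℂ) ∈ ball (0:ℂ) (R / ‖w‖) := by
    rw [mem_ball, dist_zero_right]
    rw [show ‖(1:ℂ)‖ = 1 by simp]
    rw [lt_div_iff₀ hwpos, one_mul]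
    simpa [hw, dist_eq_norm, norm_sub_rev] using mem_ball.1 hy
  have := heq h1
  simpa [hw] using this

end Auxiliary

/-- Let `φ` be a holomorphic map on a connected open set `U ⊆ ℂ^m` with values in `ℂ^n`,
whose degeneracy locus `Z = {q ∈ U : rank dφ_q < n}` is a proper subset of `U` (generic
rank `n`).  Let `Y_ℝ = U ∩ ℝ^m` be the (nonempty) real trace, a totally real submanifold
of real dimension `m` of which `U` is a complexification.  Then `Z ∩ Y_ℝ` is nowhere dense
in `Y_ℝ` (every point of `Y_ℝ` is approximated by points of `Y_ℝ` not in `Z`); in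
particular the restriction of `φ` to `Y_ℝ` has a point where its differential has
rank `n`. -/
theorem real_trace_of_degeneracy_locus_nowhere_dense (m n : ℕ)
    (U : Set (Fin m → ℂ)) (hU : IsOpen U) (hUconn : IsConnected U)
    (φ : (Fin m → ℂ) → (Fin n → ℂ)) (hφ : DifferentiableOn ℂ φ U)
    (Z : Set (Fin m → ℂ))
    (hZ : Z = {q ∈ U | Module.finrank ℂ (LinearMap.range (fderiv ℂ φ q : (Fin m → ℂ) →ₗ[ℂ] (Fin n → ℂ))) < n})
    (hZprop : Z ≠ U)
    (Yr : Set (Fin m → ℂ))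
    (hYr : Yr = {q ∈ U | ∀ i, (q i).im = 0})
    (hYne : Yr.Nonempty) :
    (∀ q ∈ Yr, ∀ ε : ℝ, 0 < ε → ∃ q' ∈ Yr, q' ∉ Z ∧ dist q q' < ε) ∧
    (∃ q ∈ Yr, Module.finrank ℂ (LinearMap.range (fderiv ℂ φ q : (Fin m → ℂ) →ₗ[ℂ] (Fin n → ℂ))) = n) := by
  -- find a point of full rank
  have hZU : Z ⊆ U := by rw [hZ]; exact sep_subset _ _
  have hne : (U \ Z).Nonempty := by
    rw [Set.diff_nonempty]
    intro hsub
    exact hZprop (Set.Subset.antisymm hZU hsub)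
  obtain ⟨q0, hq0U, hq0Z⟩ := hne
  have hrank_le : ∀ x, Module.finrank ℂ (LinearMap.range (fderiv ℂ φ x : (Fin m → ℂ) →ₗ[ℂ] (Fin n → ℂ))) ≤ n := by
    intro x
    calc Module.finrank ℂ (LinearMap.range (fderiv ℂ φ x : (Fin m → ℂ) →ₗ[ℂ] (Fin n → ℂ)))
        ≤ Module.finrank ℂ (Fin n → ℂ) := Submodule.finrank_le _
    _ = n := Module.finrank_fin_fun ℂ
  have hq0rank : Module.finrank ℂ (LinearMap.range (fderiv ℂ φ q0 : (Fin m → ℂ) →ₗ[ℂ] (Fin n → ℂ))) = n := by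
    rw [hZ] at hq0Z
    simp only [mem_setOf_eq, not_and, not_lt] at hq0Z
    exact le_antisymm (hrank_le q0) (hq0Z hq0U)
  have hq0top : LinearMap.range (fderiv ℂ φ q0 : (Fin m → ℂ) →ₗ[ℂ] (Fin n → ℂ)) = ⊤ := by
    apply Submodule.eq_top_of_finrank_eq
    rw [hq0rank, Module.finrank_fin_fun ℂ]
  have hsurj : ∀ y : Fin n → ℂ, ∃ u, fderiv ℂ φ q0 u = y := by
    intro y
    have : y ∈ LinearMap.range (fderiv ℂ φ q0 : (Fin m → ℂ) →ₗ[ℂ] (Fin n → ℂ)) := hq0top ▸ Submodule.mem_top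
    exact this
  choose v hv using fun k : Fin n => hsurj (Pi.single k 1)
  -- the determinant function
  set F : (Fin m → ℂ) → ℂ :=
    fun x => Matrix.det (Matrix.of fun i k : Fin n => fderiv ℂ φ x (v k) i) with hF
  have hFq0 : F q0 = 1 := by
    have h1 : (Matrix.of fun i k : Fin n => fderiv ℂ φ q0 (v k) i) = 1 := by
      ext i k
      rw [Matrix.of_apply, hv k, Matrix.one_apply, Pi.single_apply]
    have h2 : F q0 = (Matrix.of fun i k : Fin n => fderiv ℂ φ q0 (v k) i).det := rfl
    rw [h2, h1, Matrix.det_one]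
  -- full rank wherever F ≠ 0
  have hFrank : ∀ x ∈ U, F x ≠ 0 →
      Module.finrank ℂ (LinearMap.range (fderiv ℂ φ x : (Fin m → ℂ) →ₗ[ℂ] (Fin n → ℂ))) = n := by
    intro x _ hFx
    set A : Matrix (Fin n) (Fin n) ℂ := Matrix.of fun i k => fderiv ℂ φ x (v k) i with hA
    have hdet : A.det ≠ 0 := hFx
    have htop : LinearMap.range (fderiv ℂ φ x : (Fin m → ℂ) →ₗ[ℂ] (Fin n → ℂ)) = ⊤ := by
      rw [LinearMap.range_eq_top]
      intro y
      set c : Fin n → ℂ := A⁻¹.mulVec y with hcdef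
      have hAc : A.mulVec c = y := by
        rw [hcdef, Matrix.mulVec_mulVec, Matrix.mul_nonsing_inv _ (isUnit_iff_ne_zero.2 hdet),
          Matrix.one_mulVec]
      refine ⟨∑ k, c k • v k, ?_⟩
      rw [map_sum]
      funext i
      rw [← hAc]
      simp only [Finset.sum_apply, Pi.smul_apply, map_smul, smul_eq_mul]
      rw [Matrix.mulVec]
      simp only [dotProduct, hA, Matrix.of_apply]
      exact Finset.sum_congr rfl fun k _ => mul_comm _ _
    rw [htop, finrank_top, Module.finrank_fin_fun ℂ]
  -- holomorphy of F along complex lines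
  have hFline : ∀ p w : Fin m → ℂ, DifferentiableOn ℂ (fun z : ℂ => F (p + z • w))
      {z : ℂ | p + z • w ∈ U} := by
    intro p w
    have hopen : IsOpen {z : ℂ | p + z • w ∈ U} :=
      hU.preimage (continuous_const.add (continuous_id.smul continuous_const))
    have hentry : ∀ i k : Fin n, AnalyticOnNhd ℂ
        (fun z : ℂ => fderiv ℂ φ (p + z • w) (v k) i) {z : ℂ | p + z • w ∈ U} := by
      intro i k
      have h1 := diffOn_line_fderiv φ U hU hφ (v k) p w
      have h2 : DifferentiableOn ℂ (fun z : ℂ => fderiv ℂ φ (p + z • w) (v k) i)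
          {z : ℂ | p + z • w ∈ U} := by
        exact (ContinuousLinearMap.proj i).differentiable.comp_differentiableOn h1
      exact h2.analyticOnNhd hopen
    have hdet : AnalyticOnNhd ℂ (fun z : ℂ => F (p + z • w)) {z : ℂ | p + z • w ∈ U} := by
      have hFeq : ∀ x : Fin m → ℂ, F x = ∑ σ : Equiv.Perm (Fin n),
          ((Equiv.Perm.sign σ : ℤ) : ℂ) *
            ∏ i : Fin n, fderiv ℂ φ x (v i) (σ i) := by
        intro x
        have h2 : F x = (Matrix.of fun i k : Fin n => fderiv ℂ φ x (v k) i).det := rfl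
        rw [h2, Matrix.det_apply']
        rfl
      simp only [hFeq]
      refine Finset.analyticOnNhd_fun_sum _ fun σ _ => ?_
      refine analyticOnNhd_const.mul ?_
      exact Finset.analyticOnNhd_fun_prod _ fun i _ => hentry (σ i) i
    exact hdet.differentiableOn
  -- main density claim
  have main : ∀ q ∈ Yr, ∀ ε : ℝ, 0 < ε → ∃ q' ∈ Yr, q' ∉ Z ∧ dist q q' < ε := by
    intro q hq ε hε
    rw [hYr] at hq
    obtain ⟨hqU, hqre⟩ := hq
    by_contra hcon
    push_neg at hcon
    -- all nearby real points have F = 0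
    have hFzero : ∀ x ∈ U, dist q x < ε → (∀ i, (x i).im = 0) → F x = 0 := by
      intro x hxU hxd hxre
      by_contra hFx
      have hxZ : x ∉ Z := by
        rw [hZ]
        simp only [mem_setOf_eq, not_and, not_lt]
        intro _
        exact (hFrank x hxU hFx).ge
      have hxY : x ∈ Yr := by rw [hYr]; exact ⟨hxU, hxre⟩
      exact absurd hxd (not_lt.2 (hcon x hxY hxZ))
    obtain ⟨δ, hδ, hδU⟩ := Metric.isOpen_iff.1 hU q hqU
    set r := min δ ε with hrdef
    have hrpos : 0 < r := lt_min hδ hε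
    have hrU : ball q r ⊆ U := fun y hy => hδU (ball_subset_ball (min_le_left _ _) hy)
    have hvanish : ∀ y ∈ ball q r, F y = 0 := by
      refine aux_vanish F q r hrpos ?_ hqre ?_
      · intro p w
        exact (hFline p w).mono fun z hz => hrU hz
      · intro x hx hxre
        refine hFzero x (hrU hx) ?_ hxre
        rw [dist_comm]
        exact (mem_ball.1 hx).trans_le (min_le_right _ _)
    -- clopen argument to spread vanishing over U
    set S : Set (Fin m → ℂ) :=
      {x | ∃ ρ > 0, ball x ρ ⊆ U ∧ ∀ y ∈ ball x ρ, F y = 0} with hSdef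
    have hSopen : IsOpen S := by
      rw [Metric.isOpen_iff]
      rintro x ⟨ρ, hρ, hρU, hρ0⟩
      refine ⟨ρ, hρ, fun x' hx' => ?_⟩
      refine ⟨ρ - dist x' x, by simpa using hx', fun y hy => hρU ?_, fun y hy => hρ0 y ?_⟩ <;>
      · rw [mem_ball] at hy ⊢
        calc dist y x ≤ dist y x' + dist x' x := dist_triangle _ _ _
        _ < ρ := by linarith
    have hclosure : ∀ x ∈ U, x ∈ closure S → x ∈ S := by
      intro x hxU hxcl
      obtain ⟨R, hR, hRU⟩ := Metric.isOpen_iff.1 hU x hxU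
      obtain ⟨y, hyS, hyx⟩ : ∃ y ∈ S, y ∈ ball x (R / 2) := by
        have := Metric.mem_closure_iff.1 hxcl (R / 2) (by positivity)
        obtain ⟨y, hy1, hy2⟩ := this
        exact ⟨y, hy1, by rwa [mem_ball, dist_comm]⟩
      obtain ⟨ρy, hρy, hρyU, hρy0⟩ := hyS
      have hyU2 : ball y (R / 2) ⊆ U := by
        intro z hz
        refine hRU ?_
        rw [mem_ball] at hz hyx ⊢
        calc dist z x ≤ dist z y + dist y x := dist_triangle _ _ _
        _ < R := by linarith
      set ρ0 := min ρy (R / 2) with hρ0def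
      have hρ0pos : 0 < ρ0 := lt_min hρy (by positivity)
      have hspread : ∀ z ∈ ball y (R / 2), F z = 0 := by
        refine spread_ball F y (R / 2) ρ0 hρ0pos (min_le_right _ _) ?_ ?_
        · intro pp ww
          exact (hFline pp ww).mono fun z hz => hyU2 hz
        · intro z hz
          exact hρy0 z (ball_subset_ball (min_le_left _ _) hz)
      have hdxy : dist x y < R / 2 := by rw [dist_comm]; exact mem_ball.1 hyx
      refine ⟨R / 2 - dist x y, by linarith, ?_, ?_⟩
      · intro z hz
        refine hyU2 ?_
        rw [mem_ball] at hz ⊢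
        calc dist z y ≤ dist z x + dist x y := dist_triangle _ _ _
        _ < R / 2 := by linarith
      · intro z hz
        refine hspread z ?_
        rw [mem_ball] at hz ⊢
        calc dist z y ≤ dist z x + dist x y := dist_triangle _ _ _
        _ < R / 2 := by linarith
    have hsub : U ⊆ S ∪ (closure S)ᶜ := by
      intro x hxU
      by_cases h : x ∈ closure S
      · exact Or.inl (hclosure x hxU h)
      · exact Or.inr h
    have hdisj : Disjoint S (closure S)ᶜ :=
      Set.disjoint_left.2 fun a ha ha' => ha' (subset_closure ha)
    have hqS : q ∈ S := ⟨r, hrpos, hrU, hvanish⟩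
    have hUS : U ⊆ S :=
      hUconn.isPreconnected.subset_left_of_subset_union hSopen
        (isClosed_closure.isOpen_compl) hdisj hsub ⟨q, hqU, hqS⟩
    obtain ⟨ρ, hρ, _, hρ0⟩ := hUS hq0U
    exact one_ne_zero (hFq0 ▸ hρ0 q0 (mem_ball_self hρ))
  refine ⟨main, ?_⟩
  obtain ⟨q, hq⟩ := hYne
  obtain ⟨q', hq'Y, hq'Z, _⟩ := main q hq 1 one_pos
  refine ⟨q', hq'Y, ?_⟩
  have hq'U : q' ∈ U := by rw [hYr] at hq'Y; exact hq'Y.1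
  rw [hZ] at hq'Z
  simp only [mem_setOf_eq, not_and, not_lt] at hq'Z
  exact le_antisymm (hrank_le q') (hq'Z hq'U)
end
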